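/- Let 𝒵ₙ be the 2^{d-1}-point half-fraction design at the points (±1/2,...,±1/2) with an even number of minus signs, and 𝒵'ₘ the full 2^d-point factorial design at (±1/2,...,±1/2). Then for every d ≥ 3, the normalized covering radii satisfy n^{1/d}·CR(𝒵ₙ) = 2^{-1/d}√(d+8) > √d = m^{1/d}·CR(𝒵'ₘ), where n = 2^{d-1} and m = 2^d. -/

import Mathlib

open scoped Classical

/-- The covering radius of a set of points `D` relative to the cube `[-1,1]^d`. -/
noncomputable def coveringRadius (d : ℕ) (D : Set (EuclideanSpace ℝ (Fin d))) : ℝ :=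
  ⨆ X : {X : EuclideanSpace ℝ (Fin d) // ∀ i, X i ∈ Set.Icc (-1 : ℝ) 1},
    ⨅ Z : D, dist (X : EuclideanSpace ℝ (Fin d)) (Z : EuclideanSpace ℝ (Fin d))

/-- The half-fraction design: points `(±1/2,…,±1/2)` with an even number of
negative coordinates; it has `n = 2^{d-1}` points. -/
def halfFractionDesign (d : ℕ) : Set (EuclideanSpace ℝ (Fin d)) :=
  {Z | (∀ i, Z i = 1 / 2 ∨ Z i = -(1 / 2)) ∧
    Even (Finset.univ.filter (fun i => Z i = -(1 / 2))).card}

/-- The full factorial design: all `m = 2^d` points `(±1/2,…,±1/2)`. -/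
def fullFactorialDesign (d : ℕ) : Set (EuclideanSpace ℝ (Fin d)) :=
  {Z | ∀ i, Z i = 1 / 2 ∨ Z i = -(1 / 2)}

lemma coveringRadius_eq {d : ℕ} {D : Set (EuclideanSpace ℝ (Fin d))} (r : ℝ)
    (hD : D.Nonempty)
    (hub : ∀ X : EuclideanSpace ℝ (Fin d), (∀ i, X i ∈ Set.Icc (-1:ℝ) 1) →
      ∃ Z ∈ D, dist X Z ≤ r)
    (Xw : EuclideanSpace ℝ (Fin d)) (hXw : ∀ i, Xw i ∈ Set.Icc (-1:ℝ) 1)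
    (hlb : ∀ Z ∈ D, r ≤ dist Xw Z) :
    coveringRadius d D = r := by
  haveI : Nonempty D := hD.to_subtype
  haveI : Nonempty {X : EuclideanSpace ℝ (Fin d) // ∀ i, X i ∈ Set.Icc (-1 : ℝ) 1} :=
    ⟨⟨Xw, hXw⟩⟩
  have hbelow : ∀ X : EuclideanSpace ℝ (Fin d),
      BddBelow (Set.range fun Z : D => dist X (Z : EuclideanSpace ℝ (Fin d))) := by
    intro X
    exact ⟨0, by rintro _ ⟨Z, rfl⟩; exact dist_nonneg⟩
  have key : ∀ X : {X : EuclideanSpace ℝ (Fin d) // ∀ i, X i ∈ Set.Icc (-1 : ℝ) 1},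
      (⨅ Z : D, dist (X : EuclideanSpace ℝ (Fin d)) (Z : EuclideanSpace ℝ (Fin d))) ≤ r := by
    rintro ⟨X, hX⟩
    obtain ⟨Z, hZ, hle⟩ := hub X hX
    exact ciInf_le_of_le (hbelow X) ⟨Z, hZ⟩ hle
  refine le_antisymm (ciSup_le key) ?_
  refine le_ciSup_of_le ⟨r, by rintro _ ⟨X, rfl⟩; exact key X⟩ ⟨Xw, hXw⟩ ?_
  exact le_ciInf fun Z => hlb Z Z.2

lemma sqrt_div_four (a : ℝ) (ha : 0 ≤ a) : Real.sqrt (a / 4) = Real.sqrt a / 2 := by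
  rw [show (4:ℝ) = 2^2 by norm_num, Real.sqrt_div ha, Real.sqrt_sq (by norm_num : (0:ℝ) ≤ 2)]

lemma dist_eq' {d : ℕ} (x y : EuclideanSpace ℝ (Fin d)) :
    dist x y = Real.sqrt (∑ i, (x i - y i)^2) := by
  rw [EuclideanSpace.dist_eq]
  simp [Real.dist_eq, sq_abs]

lemma CR_full (d : ℕ) : coveringRadius d (fullFactorialDesign d) = Real.sqrt d / 2 := by
  refine coveringRadius_eq _ ?_ ?_ (WithLp.toLp 2 (fun _ => 1) : EuclideanSpace ℝ (Fin d)) (fun i => by norm_num) ?_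
  · exact ⟨(WithLp.toLp 2 (fun _ => 1/2) : EuclideanSpace ℝ (Fin d)), fun i => Or.inl rfl⟩
  · intro X hX
    refine ⟨(WithLp.toLp 2 (fun i => if 0 ≤ X i then (1:ℝ)/2 else -(1/2)) : EuclideanSpace ℝ (Fin d)),
      fun i => by by_cases h : 0 ≤ X i <;> simp [h, fullFactorialDesign], ?_⟩
    rw [dist_eq', ← sqrt_div_four d (Nat.cast_nonneg d)]
    apply Real.sqrt_le_sqrt
    calc ∑ i, (X i - (fun i => if 0 ≤ X i then (1:ℝ)/2 else -(1/2)) i)^2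
        ≤ ∑ _i : Fin d, (1:ℝ)/4 := by
          apply Finset.sum_le_sum
          intro i _
          obtain ⟨h1, h2⟩ := hX i
          by_cases h : 0 ≤ X i <;> simp only [h, if_true, if_false] <;> nlinarith
      _ = d / 4 := by simp; ring
  · intro Z hZ
    rw [dist_eq', ← sqrt_div_four d (Nat.cast_nonneg d)]
    apply Real.sqrt_le_sqrt
    calc (d:ℝ) / 4 = ∑ _i : Fin d, (1:ℝ)/4 := by simp; ring
      _ ≤ ∑ i, ((fun _ => (1:ℝ)) i - Z i)^2 := by
          apply Finset.sum_le_sum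
          intro i _
          rcases hZ i with h | h <;> rw [h] <;> norm_num

lemma half_upper (d : ℕ) (hd : 3 ≤ d) (X : EuclideanSpace ℝ (Fin d))
    (hX : ∀ i, X i ∈ Set.Icc (-1:ℝ) 1) :
    ∃ Z ∈ halfFractionDesign d, ∑ i, (X i - Z i)^2 ≤ ((d:ℝ) + 8) / 4 := by
  have hd0 : 0 < d := by omega
  set i0 : Fin d := ⟨0, hd0⟩ with hi0
  set Z0 : EuclideanSpace ℝ (Fin d) := WithLp.toLp 2 (fun i => if 0 ≤ X i then (1:ℝ)/2 else -(1/2)) with hZ0def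
  have hZ0 : ∀ i, Z0 i = 1/2 ∨ Z0 i = -(1/2) := fun i => by
    by_cases h : 0 ≤ X i <;> simp [hZ0def, h]
  have hterm : ∀ i, (X i - Z0 i)^2 ≤ 1/4 := by
    intro i
    obtain ⟨h1, h2⟩ := hX i
    by_cases h : 0 ≤ X i <;> simp only [hZ0def, h, if_true, if_false] <;> nlinarith
  set s := Finset.univ.filter (fun i => Z0 i = -(1/2)) with hs
  by_cases hpar : Even s.card
  · refine ⟨Z0, ⟨hZ0, hpar⟩, ?_⟩
    calc ∑ i, (X i - Z0 i)^2 ≤ ∑ _i : Fin d, (1:ℝ)/4 :=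
          Finset.sum_le_sum fun i _ => hterm i
      _ = d/4 := by simp; ring
      _ ≤ ((d:ℝ)+8)/4 := by linarith
  · set Z : EuclideanSpace ℝ (Fin d) := WithLp.toLp 2 (fun i => if i = i0 then -(Z0 i0) else Z0 i) with hZdef
    have hZat : ∀ i, i ≠ i0 → Z i = Z0 i := by
      intro i h
      show (if i = i0 then -Z0 i0 else Z0 i) = Z0 i
      rw [if_neg h]
    have hZi0 : Z i0 = -Z0 i0 := by
      show (if i0 = i0 then -Z0 i0 else Z0 i0) = -Z0 i0
      rw [if_pos rfl]
    have hZsgn : ∀ i, Z i = 1/2 ∨ Z i = -(1/2) := by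
      intro i
      by_cases h : i = i0
      · subst h
        rcases hZ0 i0 with h' | h'
        · right; rw [hZi0, h']
        · left; rw [hZi0, h']; norm_num
      · rw [hZat i h]; exact hZ0 i
    have hcard : Even (Finset.univ.filter (fun i => Z i = -(1/2))).card := by
      rcases hZ0 i0 with h' | h'
      · have heq : Finset.univ.filter (fun i => Z i = -(1/2)) = insert i0 s := by
          ext i
          by_cases h : i = i0
          · subst h; simp [hs, hZi0, h']
          · simp [hs, hZat i h, h]
        have hni : i0 ∉ s := by simp [hs, h']; norm_num
        rw [heq, Finset.card_insert_of_notMem hni]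
        obtain ⟨m, hm⟩ := Nat.not_even_iff_odd.mp hpar
        exact ⟨m+1, by omega⟩
      · have heq : Finset.univ.filter (fun i => Z i = -(1/2)) = s.erase i0 := by
          ext i
          by_cases h : i = i0
          · subst h; simp [hs, hZi0, h']; norm_num
          · simp [hs, hZat i h, h]
        have hmi : i0 ∈ s := by simp [hs, h']
        rw [heq, Finset.card_erase_of_mem hmi]
        obtain ⟨m, hm⟩ := Nat.not_even_iff_odd.mp hpar
        exact ⟨m, by omega⟩
    refine ⟨Z, ⟨hZsgn, hcard⟩, ?_⟩
    rw [← Finset.add_sum_erase Finset.univ _ (Finset.mem_univ i0)]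
    have h1 : (X i0 - Z i0)^2 ≤ 9/4 := by
      obtain ⟨ha, hb⟩ := hX i0
      rw [hZi0]
      rcases hZ0 i0 with h' | h' <;> rw [h'] <;> nlinarith
    have h2 : ∑ i ∈ Finset.univ.erase i0, (X i - Z i)^2 ≤ ((d:ℝ) - 1) / 4 := by
      calc ∑ i ∈ Finset.univ.erase i0, (X i - Z i)^2
          ≤ ∑ _i ∈ Finset.univ.erase i0, (1:ℝ)/4 := by
            apply Finset.sum_le_sum
            intro i hi
            have hne : i ≠ i0 := Finset.ne_of_mem_erase hi
            rw [hZat i hne]; exact hterm i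
        _ = ((d:ℝ) - 1)/4 := by
            rw [Finset.sum_const, Finset.card_erase_of_mem (Finset.mem_univ i0)]
            simp
            rw [Nat.cast_sub hd0]
            push_cast
            ring
    linarith

lemma half_lower (d : ℕ) (hd : 3 ≤ d) (Z : EuclideanSpace ℝ (Fin d))
    (hZ : Z ∈ halfFractionDesign d) :
    ((d:ℝ) + 8) / 4 ≤
      ∑ i, ((fun i => if i = (⟨0, by omega⟩ : Fin d) then (-1:ℝ) else 1) i - Z i)^2 := by
  have hd0 : 0 < d := by omega
  obtain ⟨hsgn, hev⟩ := hZ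
  set i0 : Fin d := ⟨0, hd0⟩ with hi0
  set Xw : Fin d → ℝ := fun i => if i = i0 then (-1:ℝ) else 1 with hXw
  have h14 : ∀ i, (1:ℝ)/4 ≤ (Xw i - Z i)^2 := by
    intro i
    rcases hsgn i with h | h <;> by_cases hh : i = i0 <;>
      simp only [hXw, h, hh, if_true, if_false] <;> norm_num
  have hex : ∃ j, (9:ℝ)/4 ≤ (Xw j - Z j)^2 := by
    by_contra hc
    push_neg at hc
    have hzi : ∀ i, i ≠ i0 → Z i = 1/2 := by
      intro i hi
      rcases hsgn i with h | h
      · exact h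
      · exfalso
        have := hc i
        rw [hXw] at this
        simp only [hi, if_false, h] at this
        norm_num at this
    have hzi0 : Z i0 = -(1/2) := by
      rcases hsgn i0 with h | h
      · exfalso
        have := hc i0
        rw [hXw] at this
        simp only [if_pos rfl, h] at this
        norm_num at this
      · exact h
    have : Finset.univ.filter (fun i => Z i = -(1/2)) = {i0} := by
      ext i
      by_cases h : i = i0
      · subst h; simp [hzi0]
      · simp [h, hzi i h]
        norm_num
    rw [this] at hev
    simp at hev
  obtain ⟨j, hj⟩ := hex
  rw [← Finset.add_sum_erase Finset.univ _ (Finset.mem_univ j)]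
  have h2 : ((d:ℝ) - 1) / 4 ≤ ∑ i ∈ Finset.univ.erase j, (Xw i - Z i)^2 := by
    calc ((d:ℝ) - 1)/4 = ∑ _i ∈ Finset.univ.erase j, (1:ℝ)/4 := by
          rw [Finset.sum_const, Finset.card_erase_of_mem (Finset.mem_univ j)]
          simp
          rw [Nat.cast_sub hd0]
          push_cast
          ring
      _ ≤ _ := Finset.sum_le_sum fun i _ => h14 i
  linarith

lemma CR_half (d : ℕ) (hd : 3 ≤ d) :
    coveringRadius d (halfFractionDesign d) = Real.sqrt ((d:ℝ) + 8) / 2 := by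
  have hd0 : 0 < d := by omega
  have h8 : (0:ℝ) ≤ (d:ℝ) + 8 := by positivity
  refine coveringRadius_eq _ ?_ ?_
      (WithLp.toLp 2 (fun i => if i = (⟨0, hd0⟩ : Fin d) then (-1:ℝ) else 1) : EuclideanSpace ℝ (Fin d))
      (fun i => by by_cases h : i = (⟨0, hd0⟩ : Fin d) <;> simp [h]) ?_
  · refine ⟨(WithLp.toLp 2 (fun _ => 1/2) : EuclideanSpace ℝ (Fin d)), fun i => Or.inl rfl, ?_⟩
    have : Finset.univ.filter (fun i : Fin d => (WithLp.toLp 2 (fun _ => (1:ℝ)/2) : EuclideanSpace ℝ (Fin d)) i = -(1/2)) = ∅ := by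
      apply Finset.filter_false_of_mem
      intro i _
      norm_num
    rw [this]
    simp
  · intro X hX
    obtain ⟨Z, hZmem, hsum⟩ := half_upper d hd X hX
    refine ⟨Z, hZmem, ?_⟩
    rw [dist_eq', ← sqrt_div_four _ h8]
    exact Real.sqrt_le_sqrt hsum
  · intro Z hZmem
    rw [dist_eq', ← sqrt_div_four _ h8]
    apply Real.sqrt_le_sqrt
    exact half_lower d hd Z hZmem

lemma key_ineq (d : ℕ) (hd : 3 ≤ d) : (2:ℝ) ^ ((2:ℝ)/d) < 1 + 8/d := by
  have hdR : (0:ℝ) < d := by positivity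
  have hb : (0:ℝ) ≤ 1 + 8/d := by positivity
  apply lt_of_pow_lt_pow_left₀ d hb
  have e1 : ((2:ℝ) ^ ((2:ℝ)/d)) ^ d = 4 := by
    rw [← Real.rpow_natCast ((2:ℝ) ^ ((2:ℝ)/d)) d, ← Real.rpow_mul (by norm_num : (0:ℝ) ≤ 2),
      div_mul_cancel₀ _ (ne_of_gt hdR)]
    rw [show (2:ℝ) = ((2:ℕ):ℝ) by norm_num, Real.rpow_natCast]
    norm_num
  rw [e1]
  have hm2 : (-2:ℝ) ≤ 8/d := le_trans (by norm_num : (-2:ℝ) ≤ 0) (by positivity)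
  have hB := one_add_mul_le_pow hm2 d
  have h9 : (9:ℝ) ≤ (1 + 8/d)^d := by
    have : (1:ℝ) + d * (8/d) = 9 := by field_simp; norm_num
    linarith
  linarith

theorem normalized_coveringRadius_comparison (d : ℕ) (hd : 3 ≤ d) :
    ((2 : ℝ) ^ (d - 1)) ^ ((1 : ℝ) / d) * coveringRadius d (halfFractionDesign d) =
      (2 : ℝ) ^ (-(1 : ℝ) / d) * Real.sqrt (d + 8) ∧
    (2 : ℝ) ^ (-(1 : ℝ) / d) * Real.sqrt (d + 8) > Real.sqrt d ∧
    Real.sqrt d = ((2 : ℝ) ^ d) ^ ((1 : ℝ) / d) * coveringRadius d (fullFactorialDesign d) := by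
  have hd0 : 0 < d := by omega
  have hdR : (0:ℝ) < d := by positivity
  have hdne : (d:ℝ) ≠ 0 := ne_of_gt hdR
  refine ⟨?_, ?_, ?_⟩
  · rw [CR_half d hd]
    rw [← Real.rpow_natCast 2 (d-1), ← Real.rpow_mul (by norm_num : (0:ℝ) ≤ 2)]
    have hc : ((d - 1 : ℕ) : ℝ) = (d:ℝ) - 1 := by
      rw [Nat.cast_sub hd0]; norm_num
    rw [hc]
    have he : -(1:ℝ)/d = ((d:ℝ) - 1) * (1/d) - 1 := by field_simp; ring
    rw [he, Real.rpow_sub (by norm_num : (0:ℝ) < 2), Real.rpow_one]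
    ring
  · -- strict inequality
    have key := key_ineq d hd
    set b : ℝ := (2:ℝ) ^ ((2:ℝ)/d) with hb
    have hbpos : 0 < b := Real.rpow_pos_of_pos (by norm_num) _
    have key2 : b * d < (d:ℝ) + 8 := by
      have := mul_lt_mul_of_pos_right key hdR
      have h' : (1 + 8/(d:ℝ)) * d = d + 8 := by field_simp
      linarith [this, h'.le]
    have hc : (0:ℝ) < (2:ℝ) ^ (-(1:ℝ)/d) := Real.rpow_pos_of_pos (by norm_num) _
    have hsq : ((2:ℝ) ^ (-(1:ℝ)/d))^2 = b⁻¹ := by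
      rw [← Real.rpow_natCast ((2:ℝ) ^ (-(1:ℝ)/d)) 2, ← Real.rpow_mul (by norm_num : (0:ℝ) ≤ 2)]
      rw [hb, ← Real.rpow_neg (by norm_num : (0:ℝ) ≤ 2)]
      congr 1
      push_cast
      ring
    have hlt : (d:ℝ) < ((2:ℝ) ^ (-(1:ℝ)/d))^2 * ((d:ℝ) + 8) := by
      rw [hsq]
      rw [lt_inv_mul_iff₀ hbpos]
      linarith
    calc Real.sqrt d < Real.sqrt (((2:ℝ) ^ (-(1:ℝ)/d))^2 * ((d:ℝ) + 8)) :=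
          Real.sqrt_lt_sqrt (Nat.cast_nonneg d) hlt
      _ = (2:ℝ) ^ (-(1:ℝ)/d) * Real.sqrt ((d:ℝ) + 8) := by
          rw [Real.sqrt_mul (sq_nonneg _), Real.sqrt_sq hc.le]
  · rw [CR_full d]
    rw [← Real.rpow_natCast 2 d, ← Real.rpow_mul (by norm_num : (0:ℝ) ≤ 2),
      mul_one_div_cancel hdne, Real.rpow_one]
    ring
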